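/- Let f be the Fibonacci word and g = 0f (the Fibonacci word prefixed with a 0). For every nonempty finite set A ⊆ ℕ, the sum Σ_{n ∈ A} F_{2n+2} is a position at which g has the letter 0, and the sum Σ_{n ∈ A} F_{2n+1} is a position at which g has the letter 1 (where F_0 = 1, F_1 = 2, F_{n+2} = F_{n+1} + F_n). Consequently both g|_0 and g|_1 are IP-sets, and so neither g|_0 nor g|_1 is an IP*-set. -/

import Mathlib

/-- The set of occurrences of the finite word `u` in the infinite word `x`. -/
def Occ {A : Type*} (x : ℕ → A) (u : List A) : Set ℕ :=
  {n | u = (List.range u.length).map fun i => x (n + i)}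

/-- `u` is a prefix of the infinite word `x`. -/
def IsPref {A : Type*} (u : List A) (x : ℕ → A) : Prop :=
  u = (List.range u.length).map x

/-- `S` is an IP-set: it contains all finite sums of distinct terms of some
strictly increasing sequence of natural numbers. -/
def IPSet (S : Set ℕ) : Prop :=
  ∃ x : ℕ → ℕ, StrictMono x ∧
    ∀ F : Finset ℕ, F.Nonempty → (∑ n ∈ F, x n) ∈ S

/-- `S` is an IP*-set: it meets every IP-set. -/
def IPStar (S : Set ℕ) : Prop :=
  ∀ B : Set ℕ, IPSet B → (S ∩ B).Nonempty

/-- The Fibonacci substitution 0 ↦ 01, 1 ↦ 0. -/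
def σfib : ℕ → List ℕ := fun a => if a = 0 then [0, 1] else [0]

namespace Aux13

def W : ℕ → List ℕ
  | 0 => [0]
  | k+1 => (W k).flatMap σfib

lemma W_add_two (k : ℕ) : W (k + 2) = W (k + 1) ++ W k := by
  induction k with
  | zero => rfl
  | succ k ih =>
    calc W (k+3) = (W (k+1) ++ W k).flatMap σfib := by rw [← ih]; rfl
    _ = W (k+2) ++ W (k+1) := by rw [List.flatMap_append]; rfl

section
variable {f F : ℕ → ℕ}

lemma W_length (hF0 : F 0 = 1) (hF1 : F 1 = 2)
    (hF : ∀ n, F (n + 2) = F (n + 1) + F n) : ∀ k, (W k).length = F k := by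
  intro k
  induction k using Nat.strong_induction_on with
  | _ k ih =>
    match k with
    | 0 => simpa [W] using hF0.symm
    | 1 => simpa [W, σfib] using hF1.symm
    | (k+2) =>
      rw [W_add_two, List.length_append, ih (k+1) (by omega), ih k (by omega), hF]

lemma W_pref (hf0 : f 0 = 0)
    (hfix : ∀ n : ℕ, IsPref (((List.range n).map f).flatMap σfib) f) :
    ∀ k, IsPref (W k) f := by
  intro k
  induction k with
  | zero =>
    show [0] = (List.range 1).map f
    rw [show List.range 1 = [0] from rfl]; simp [hf0]
  | succ k ih =>
    have h := hfix (W k).length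
    rw [← ih] at h
    exact h

lemma pref_get {u : List ℕ} (h : IsPref u f) {p : ℕ} (hp : p < u.length) :
    u[p]? = some (f p) := by
  conv_lhs => rw [h]
  simp [hp]

variable (hf0 : f 0 = 0)
    (hfix : ∀ n : ℕ, IsPref (((List.range n).map f).flatMap σfib) f)
    (hF0 : F 0 = 1) (hF1 : F 1 = 2) (hF : ∀ n, F (n + 2) = F (n + 1) + F n)

include hf0 hfix hF0 hF1 hF
set_option linter.unusedSectionVars false

lemma F_pos : ∀ n, 0 < F n := by
  intro n
  induction n using Nat.strong_induction_on with
  | _ n ih =>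
    match n with
    | 0 => omega
    | 1 => omega
    | (n+2) => have := ih n (by omega); rw [hF]; omega

lemma shift {k p : ℕ} (hp : p < F k) : f (F (k + 1) + p) = f p := by
  have hlen := W_length hF0 hF1 hF
  have hpref := W_pref hf0 hfix
  have h1 : (W (k+2))[F (k+1) + p]? = some (f (F (k+1) + p)) :=
    pref_get (hpref (k+2)) (by rw [hlen, hF]; omega)
  rw [W_add_two, List.getElem?_append_right (by rw [hlen]; omega)] at h1
  rw [hlen (k+1), Nat.add_sub_cancel_left] at h1
  rw [pref_get (hpref k) (by rw [hlen]; omega)] at h1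
  exact (Option.some_injective _ h1).symm

lemma f_one : f 1 = 1 := by
  have h := pref_get (f := f) (W_pref hf0 hfix 1) (p := 1) (by decide)
  rw [show W 1 = [0,1] from rfl] at h
  simpa using h.symm

lemma step {k : ℕ} : f (F (k + 2) - 1) = f (F k - 1) := by
  have h1 := F_pos (f := f) hf0 hfix hF0 hF1 hF k
  have h2 : F (k+2) - 1 = F (k+1) + (F k - 1) := by rw [hF]; omega
  rw [h2, shift hf0 hfix hF0 hF1 hF (by omega)]

lemma fF_even : ∀ k, f (F (2 * k + 2) - 1) = 0 := by
  intro k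
  induction k with
  | zero => simpa [hF0] using step hf0 hfix hF0 hF1 hF (k := 0) |>.trans (by rw [hF0]; simpa using hf0)
  | succ k ih =>
    have := step hf0 hfix hF0 hF1 hF (k := 2*k+2)
    rw [show 2*(k+1)+2 = 2*k+2+2 by ring, this, ih]

lemma fF_odd : ∀ k, f (F (2 * k + 1) - 1) = 1 := by
  intro k
  induction k with
  | zero =>
    rw [show 2*0+1 = 1 by ring, hF1]
    simpa using f_one hf0 hfix hF0 hF1 hF
  | succ k ih =>
    have := step hf0 hfix hF0 hF1 hF (k := 2*k+1)
    rw [show 2*(k+1)+1 = 2*k+1+2 by ring, this, ih]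

lemma sum_even (M : ℕ) : (∑ n ∈ Finset.range M, F (2 * n + 2)) + 2 = F (2 * M + 1) := by
  induction M with
  | zero => simp [hF1]
  | succ M ih =>
    have h1 := hF (2*M+1)
    rw [show 2*M+1+1 = 2*M+2 by ring] at h1
    rw [Finset.sum_range_succ, show 2*(M+1)+1 = 2*M+1+2 by ring, h1]
    omega

lemma sum_odd (M : ℕ) : (∑ n ∈ Finset.range M, F (2 * n + 1)) + 1 = F (2 * M) := by
  induction M with
  | zero => simp [hF0]
  | succ M ih =>
    have h1 := hF (2*M)
    rw [show 2*M+1+1 = 2*M+2 by ring] at h1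
    rw [Finset.sum_range_succ, show 2*(M+1) = 2*M+2 by ring, hF]
    omega

lemma main0 : ∀ A : Finset ℕ, A.Nonempty → f ((∑ n ∈ A, F (2 * n + 2)) - 1) = 0 := by
  intro A
  induction A using Finset.strongInduction with
  | _ A ih =>
    intro hA
    set M := A.max' hA with hMdef
    have hM : M ∈ A := A.max'_mem hA
    have hsum : ∑ n ∈ A, F (2*n+2) = F (2*M+2) + ∑ n ∈ A.erase M, F (2*n+2) :=
      (Finset.add_sum_erase A _ hM).symm
    by_cases hA' : (A.erase M).Nonempty
    · have hsub : A.erase M ⊆ Finset.range M := by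
        intro x hx
        rw [Finset.mem_erase] at hx
        exact Finset.mem_range.mpr (lt_of_le_of_ne (A.le_max' x hx.2) hx.1)
      have hle : ∑ n ∈ A.erase M, F (2*n+2) ≤ ∑ n ∈ Finset.range M, F (2*n+2) :=
        Finset.sum_le_sum_of_subset hsub
      have hpos : 0 < ∑ n ∈ A.erase M, F (2*n+2) :=
        Finset.sum_pos (fun i _ => F_pos hf0 hfix hF0 hF1 hF _) hA'
      have hb := sum_even hf0 hfix hF0 hF1 hF M
      have hbound : (∑ n ∈ A.erase M, F (2*n+2)) - 1 < F (2*M+1) := by omega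
      have hsh := shift hf0 hfix hF0 hF1 hF (k := 2*M+1) hbound
      rw [show 2*M+1+1 = 2*M+2 by omega] at hsh
      have harith : (∑ n ∈ A, F (2*n+2)) - 1
          = F (2*M+2) + ((∑ n ∈ A.erase M, F (2*n+2)) - 1) := by omega
      rw [harith, hsh]
      exact ih (A.erase M) (Finset.erase_ssubset hM) hA'
    · rw [hsum, Finset.not_nonempty_iff_eq_empty.mp hA', Finset.sum_empty, Nat.add_zero]
      exact fF_even hf0 hfix hF0 hF1 hF M

lemma main1 : ∀ A : Finset ℕ, A.Nonempty → f ((∑ n ∈ A, F (2 * n + 1)) - 1) = 1 := by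
  intro A
  induction A using Finset.strongInduction with
  | _ A ih =>
    intro hA
    set M := A.max' hA with hMdef
    have hM : M ∈ A := A.max'_mem hA
    have hsum : ∑ n ∈ A, F (2*n+1) = F (2*M+1) + ∑ n ∈ A.erase M, F (2*n+1) :=
      (Finset.add_sum_erase A _ hM).symm
    by_cases hA' : (A.erase M).Nonempty
    · have hsub : A.erase M ⊆ Finset.range M := by
        intro x hx
        rw [Finset.mem_erase] at hx
        exact Finset.mem_range.mpr (lt_of_le_of_ne (A.le_max' x hx.2) hx.1)
      have hle : ∑ n ∈ A.erase M, F (2*n+1) ≤ ∑ n ∈ Finset.range M, F (2*n+1) :=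
        Finset.sum_le_sum_of_subset hsub
      have hpos : 0 < ∑ n ∈ A.erase M, F (2*n+1) :=
        Finset.sum_pos (fun i _ => F_pos hf0 hfix hF0 hF1 hF _) hA'
      have hb := sum_odd hf0 hfix hF0 hF1 hF M
      have hbound : (∑ n ∈ A.erase M, F (2*n+1)) - 1 < F (2*M) := by omega
      have hsh := shift hf0 hfix hF0 hF1 hF (k := 2*M) hbound
      have harith : (∑ n ∈ A, F (2*n+1)) - 1
          = F (2*M+1) + ((∑ n ∈ A.erase M, F (2*n+1)) - 1) := by omega
      rw [harith, hsh]
      exact ih (A.erase M) (Finset.erase_ssubset hM) hA'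
    · rw [hsum, Finset.not_nonempty_iff_eq_empty.mp hA', Finset.sum_empty, Nat.add_zero]
      exact fF_odd hf0 hfix hF0 hF1 hF M

end
end Aux13


theorem stmt_13 (f : ℕ → ℕ) (hf0 : f 0 = 0)
    (hfix : ∀ n : ℕ, IsPref (((List.range n).map f).flatMap σfib) f)
    (F : ℕ → ℕ) (hF0 : F 0 = 1) (hF1 : F 1 = 2)
    (hF : ∀ n, F (n + 2) = F (n + 1) + F n)
    (g : ℕ → ℕ) (hg0 : g 0 = 0) (hg : ∀ n, g (n + 1) = f n) :
    (∀ A : Finset ℕ, A.Nonempty →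
        g (∑ n ∈ A, F (2 * n + 2)) = 0 ∧ g (∑ n ∈ A, F (2 * n + 1)) = 1) ∧
      IPSet {n | g n = 0} ∧ IPSet {n | g n = 1} ∧
      ¬ IPStar {n | g n = 0} ∧ ¬ IPStar {n | g n = 1} := by
  classical
  have hFpos : ∀ n, 0 < F n := Aux13.F_pos hf0 hfix hF0 hF1 hF
  have hFmono : StrictMono F := by
    apply strictMono_nat_of_lt_succ
    intro n
    match n with
    | 0 => norm_num [hF0, hF1]
    | (n+1) => have := hFpos n; rw [hF]; omega
  have key : ∀ A : Finset ℕ, A.Nonempty →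
      g (∑ n ∈ A, F (2 * n + 2)) = 0 ∧ g (∑ n ∈ A, F (2 * n + 1)) = 1 := by
    intro A hA
    have hpos0 : 0 < ∑ n ∈ A, F (2 * n + 2) :=
      Finset.sum_pos (fun i _ => hFpos _) hA
    have hpos1 : 0 < ∑ n ∈ A, F (2 * n + 1) :=
      Finset.sum_pos (fun i _ => hFpos _) hA
    constructor
    · rw [show (∑ n ∈ A, F (2 * n + 2)) = ((∑ n ∈ A, F (2 * n + 2)) - 1) + 1 by omega,
        hg]
      exact Aux13.main0 hf0 hfix hF0 hF1 hF A hA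
    · rw [show (∑ n ∈ A, F (2 * n + 1)) = ((∑ n ∈ A, F (2 * n + 1)) - 1) + 1 by omega,
        hg]
      exact Aux13.main1 hf0 hfix hF0 hF1 hF A hA
  have ip0 : IPSet {n | g n = 0} := by
    refine ⟨fun n => F (2 * n + 2), fun a b hab => hFmono (by omega), fun A hA => ?_⟩
    exact (key A hA).1
  have ip1 : IPSet {n | g n = 1} := by
    refine ⟨fun n => F (2 * n + 1), fun a b hab => hFmono (by omega), fun A hA => ?_⟩
    exact (key A hA).2
  refine ⟨key, ip0, ip1, ?_, ?_⟩
  · intro h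
    obtain ⟨x, hx0, hx1⟩ := h {n | g n = 1} ip1
    simp only [Set.mem_setOf_eq] at hx0 hx1
    omega
  · intro h
    obtain ⟨x, hx0, hx1⟩ := h {n | g n = 0} ip0
    simp only [Set.mem_setOf_eq] at hx0 hx1
    omega
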